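/- arXiv:2502.16067 — 3 statements merged into one kernel-verified Lean document; each statement's English description precedes it below -/
import Mathlib

section
/- Let g ∈ 𝔽_q[T] be monic and c ∈ 𝔽_q[T] with c ≠ 0 and deg c < deg g. Then Σ_{f ∈ M_n} e(cf/g) = 0 for every n > deg g − deg c − 1; consequently the series D_1(u;c/g) = Σ_{f ∈ M} e(cf/g)·u^{deg f} is a polynomial in u, and for every u ∈ ℂ with qu ≠ 1 it satisfies D_1(u;c/g) = (qu)^{deg g − deg c − 1}·( e_q(sgn(c)) − 1/(1 − qu) ) + 1/(1 − qu), where sgn(c) denotes the leading coefficient of c. -/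
open Polynomial
open scoped Classical

noncomputable section

/-- The canonical additive character of a finite field `F`:
`e_q(y) = exp(2πi·Tr(y)/p)` where `p` is the characteristic. -/
def eChar (F : Type) [Field F] [Fintype F] (y : F) : ℂ :=
  letI : Algebra (ZMod (ringChar F)) F := ZMod.algebra F (ringChar F)
  Complex.exp (2 * Real.pi * Complex.I *
    ((Algebra.trace (ZMod (ringChar F)) F y).val : ℂ) / (ringChar F : ℂ))

variable {F : Type} [Field F] [Fintype F]

/-- `e(a/g) = e_q(coefficient of T^(deg g - 1) of (a mod g))`. -/
def eFrac (a g : Polynomial F) : ℂ :=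
  eChar F ((a % g).coeff (g.natDegree - 1))

/-- Number of monic divisors of a polynomial. -/
def dCount (f : Polynomial F) : ℕ :=
  Set.ncard {g : Polynomial F | g.Monic ∧ g ∣ f}

/-- `r_χ(f) = Σ_{g monic, g ∣ f} χ(g)`. -/
def rChi (χ : Polynomial F → ℂ) (f : Polynomial F) : ℂ :=
  ∑ᶠ g ∈ {g : Polynomial F | g.Monic ∧ g ∣ f}, χ g

/-- A Dirichlet character modulo `ℓ`: a function induced by a group homomorphism
`(F[T]/(ℓ))^× → ℂ^×`, extended by zero on non-coprime arguments. -/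
def IsDirichletChar (ℓ : Polynomial F) (χ : Polynomial F → ℂ) : Prop :=
  (∀ f g : Polynomial F, f % ℓ = g % ℓ → χ f = χ g) ∧
  (∀ f g : Polynomial F, χ (f * g) = χ f * χ g) ∧ χ 1 = 1 ∧
  ∀ f : Polynomial F, χ f = 0 ↔ ¬ IsCoprime f ℓ

/-- Primitivity: `χ` is not induced by a character modulo a proper (monic) divisor of `ℓ`. -/
def IsPrimitiveChar (ℓ : Polynomial F) (χ : Polynomial F → ℂ) : Prop :=
  IsDirichletChar ℓ χ ∧
  ∀ ℓ' : Polynomial F, ℓ'.Monic → ℓ' ∣ ℓ → ℓ' ≠ ℓ →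
    ¬ ∃ χ' : Polynomial F → ℂ, IsDirichletChar ℓ' χ' ∧
      ∀ f : Polynomial F, IsCoprime f ℓ → χ f = χ' f

/-- Complex conjugate character. -/
def conjChar (χ : Polynomial F → ℂ) : Polynomial F → ℂ := fun f => starRingEnd ℂ (χ f)

/-- `L(s,χ) = Σ_{f monic} χ(f)|f|^{-s}`, summed by degree. -/
def LFun (χ : Polynomial F → ℂ) (s : ℂ) : ℂ :=
  ∑' n : ℕ, (∑ᶠ f ∈ {f : Polynomial F | f.Monic ∧ f.natDegree = n}, χ f) *
    (Fintype.card F : ℂ) ^ (-(s * (n : ℂ)))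

/-- Gauss sum `G(χ) = Σ_{deg a < deg ℓ} χ(a)·e(a/ℓ)`. -/
def GSum (ℓ : Polynomial F) (χ : Polynomial F → ℂ) : ℂ :=
  ∑ᶠ a ∈ {a : Polynomial F | a.degree < ℓ.degree}, χ a * eFrac a ℓ

/-- Kloosterman sum over `F`. -/
def Kl2 (α β : F) : ℂ :=
  ∑ γ : Fˣ, eChar F (α * (γ : F) + β * ((γ⁻¹ : Fˣ) : F))

/-- Twisted Kloosterman sum over `F`. -/
def KlChi (χ : Polynomial F → ℂ) (α β : F) : ℂ :=
  ∑ γ : Fˣ, χ (Polynomial.C (γ : F)) * eChar F (α * (γ : F) + β * ((γ⁻¹ : Fˣ) : F))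

/-- Gauss sum of the restriction of `χ` to `F`. -/
def tauChi (χ : Polynomial F → ℂ) (α : F) : ℂ :=
  ∑ γ : Fˣ, χ (Polynomial.C (γ : F)) * eChar F (α * (γ : F))

/-- Generalized binomial coefficient `C(-m, j)`. -/
def negBinom (m j : ℕ) : ℤ :=
  if m = 0 then (if j = 0 then 1 else 0) else (-1) ^ j * (Nat.choose (m + j - 1) j)

/-- The coefficients `b_k(χ; λ, η₁, η₂)` of the Voronoi summation formula. -/
def bCoeff (χ : Polynomial F → ℂ) (lam : F) (η₁ η₂ k : ℕ) : ℂ :=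
  (-1 : ℂ) ^ (k - η₁ - η₂) * KlChi χ ((η₁ : F) - 1) ((1 - (η₂ : F)) * lam) *
    (if η₁ + η₂ ≤ k then (negBinom (η₁ + η₂) (k - η₁ - η₂) : ℂ) else 0)

/-- The untwisted coefficients `b_k(λ, η₁, η₂)`. -/
def bCoeffD (lam : F) (η₁ η₂ k : ℕ) : ℂ :=
  (-1 : ℂ) ^ (k - η₁ - η₂) * Kl2 ((η₁ : F) - 1) ((1 - (η₂ : F)) * lam) *
    (if η₁ + η₂ ≤ k then (negBinom (η₁ + η₂) (k - η₁ - η₂) : ℂ) else 0)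

/-- The series `Σ_{f monic} c(f)·u^{deg f}` (as a `tsum`). -/
def monicSeries (c : Polynomial F → ℂ) (u : ℂ) : ℂ :=
  ∑' f : {f : Polynomial F // f.Monic}, c f * u ^ (f : Polynomial F).natDegree

/-- `φ` is the rational continuation of the series `u ↦ Σ_{f monic} c(f)·u^{deg f}`:
it agrees with the (convergent) series on `‖u‖ < 1/q` and is a rational function. -/
def IsRatCont (c : Polynomial F → ℂ) (φ : ℂ → ℂ) : Prop :=
  (∃ P Q : Polynomial ℂ, IsCoprime P Q ∧ Q ≠ 0 ∧
    ∀ z : ℂ, Q.eval z ≠ 0 → φ z = P.eval z / Q.eval z) ∧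
  ∀ u : ℂ, ‖u‖ < 1 / (Fintype.card F) →
    HasSum (fun f : {f : Polynomial F // f.Monic} => c f * u ^ (f : Polynomial F).natDegree)
      (φ u)

end


noncomputable section AuxEstermann
variable {F : Type} [Field F] [Fintype F]

private lemma ringChar_prime' (F : Type) [Field F] [Fintype F] : Nat.Prime (ringChar F) :=
  CharP.char_is_prime F (ringChar F)

lemma eChar_add (x y : F) : eChar F (x + y) = eChar F x * eChar F y := by
  letI : Algebra (ZMod (ringChar F)) F := ZMod.algebra F (ringChar F)
  have hp : ringChar F ≠ 0 := (ringChar_prime' F).ne_zero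
  haveI : NeZero (ringChar F) := ⟨hp⟩
  have exp_congr_aux : ∀ a b : ℕ, (a : ZMod (ringChar F)) = (b : ZMod (ringChar F)) →
      Complex.exp (2 * Real.pi * Complex.I * a / (ringChar F)) =
        Complex.exp (2 * Real.pi * Complex.I * b / (ringChar F)) := by
    intro a b h
    have hdvd : ((ringChar F : ℤ)) ∣ (a : ℤ) - b := by
      rwa [← ZMod.intCast_zmod_eq_zero_iff_dvd, Int.cast_sub, Int.cast_natCast, Int.cast_natCast,
        sub_eq_zero]
    obtain ⟨k, hk⟩ := hdvd
    rw [Complex.exp_eq_exp_iff_exists_int]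
    refine ⟨k, ?_⟩
    have hpC : ((ringChar F : ℕ) : ℂ) ≠ 0 := Nat.cast_ne_zero.mpr hp
    have hk' : (a : ℂ) - b = (ringChar F) * k := by
      exact_mod_cast congrArg (Int.cast : ℤ → ℂ) hk
    field_simp
    linear_combination hk'
  unfold eChar
  rw [← Complex.exp_add, map_add]
  set a := Algebra.trace (ZMod (ringChar F)) F x with ha
  set b := Algebra.trace (ZMod (ringChar F)) F y with hb
  rw [show (2 * (Real.pi:ℂ) * Complex.I * (a.val : ℂ) / (ringChar F : ℂ)
      + 2 * Real.pi * Complex.I * (b.val : ℂ) / (ringChar F : ℂ))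
      = 2 * Real.pi * Complex.I * ((a.val + b.val : ℕ) : ℂ) / (ringChar F : ℂ) by
    push_cast; ring]
  apply exp_congr_aux
  push_cast
  simp [ZMod.natCast_val, ZMod.cast_id]

lemma eChar_zero : eChar F 0 = 1 := by
  letI : Algebra (ZMod (ringChar F)) F := ZMod.algebra F (ringChar F)
  have hp : ringChar F ≠ 0 := (ringChar_prime' F).ne_zero
  haveI : NeZero (ringChar F) := ⟨hp⟩
  unfold eChar
  simp

lemma eChar_exists_ne_one : ∃ y : F, eChar F y ≠ 1 := by
  letI : Algebra (ZMod (ringChar F)) F := ZMod.algebra F (ringChar F)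
  have hpp : Nat.Prime (ringChar F) := ringChar_prime' F
  have hp : ringChar F ≠ 0 := hpp.ne_zero
  haveI : NeZero (ringChar F) := ⟨hp⟩
  obtain ⟨b, hb⟩ := FiniteField.trace_to_zmod_nondegenerate F (one_ne_zero (α := F))
  rw [one_mul] at hb
  refine ⟨b, ?_⟩
  unfold eChar
  intro h
  set t := Algebra.trace (ZMod (ringChar F)) F b with ht
  rw [show (1 : ℂ) = Complex.exp (2 * Real.pi * Complex.I * ((0:ℕ) : ℂ) / (ringChar F : ℂ)) by
    simp] at h
  rw [Complex.exp_eq_exp_iff_exists_int] at h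
  obtain ⟨k, hk⟩ := h
  have hpC : ((ringChar F : ℕ) : ℂ) ≠ 0 := Nat.cast_ne_zero.mpr hp
  have h2 : (t.val : ℂ) = k * (ringChar F) := by
    have hπ : (2 * (Real.pi : ℂ) * Complex.I) ≠ 0 := by
      simp [Real.pi_ne_zero, Complex.I_ne_zero, Complex.ofReal_ne_zero]
    simp only [Nat.cast_zero, mul_zero, zero_div, zero_add] at hk
    have hk2 := congrArg (fun z : ℂ => z * (ringChar F : ℂ)) hk
    simp only [div_mul_cancel₀ _ hpC] at hk2
    exact mul_left_cancel₀ hπ (by linear_combination hk2)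
  have h3 : (t.val : ℤ) = k * (ringChar F) := by exact_mod_cast h2
  have hdvd : ((ringChar F : ℤ)) ∣ (t.val : ℤ) := ⟨k, by linarith⟩
  have hdvd' : ringChar F ∣ t.val := Int.ofNat_dvd.mp (by exact_mod_cast hdvd)
  have hlt : t.val < ringChar F := ZMod.val_lt t
  have hne : t.val ≠ 0 := fun h0 => hb ((ZMod.val_eq_zero t).mp h0)
  exact absurd (Nat.le_of_dvd (Nat.pos_of_ne_zero hne) hdvd') (not_le.mpr hlt)

lemma sum_eChar_linear {V : Type} [AddCommGroup V] [Module F V] [Fintype V]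
    (L : V →ₗ[F] F) (hL : L ≠ 0) : ∑ v : V, eChar F (L v) = 0 := by
  obtain ⟨y0, hy0⟩ := eChar_exists_ne_one (F := F)
  obtain ⟨v1, hv1⟩ : ∃ v, L v ≠ 0 := by
    by_contra h
    push_neg at h
    exact hL (LinearMap.ext fun v => h v)
  set v0 : V := ((L v1)⁻¹ * y0) • v1 with hv0
  have hLv0 : L v0 = y0 := by
    rw [hv0, map_smul, smul_eq_mul]
    field_simp
  have h : eChar F y0 * ∑ v : V, eChar F (L v) = ∑ v : V, eChar F (L v) := by
    rw [Finset.mul_sum]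
    calc ∑ v : V, eChar F y0 * eChar F (L v)
        = ∑ v : V, eChar F (L (v0 + v)) := by
          refine Finset.sum_congr rfl fun v _ => ?_
          rw [map_add, hLv0, eChar_add]
      _ = ∑ v : V, eChar F (L v) := Fintype.sum_equiv (Equiv.addLeft v0) _ _ (fun v => rfl)
  have h2 : (eChar F y0 - 1) * ∑ v : V, eChar F (L v) = 0 := by linear_combination h
  rcases mul_eq_zero.mp h2 with h3 | h3
  · exact absurd (sub_eq_zero.mp h3) hy0
  · exact h3

/-- The linear map `f ↦ ((c*f) %ₘ g).coeff (deg g - 1)`. -/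
def Lcg (c g : Polynomial F) : Polynomial F →ₗ[F] F where
  toFun v := ((c * v) %ₘ g).coeff (g.natDegree - 1)
  map_add' x y := by rw [mul_add, Polynomial.add_modByMonic, Polynomial.coeff_add]
  map_smul' a v := by
    rw [RingHom.id_apply, mul_smul_comm, Polynomial.smul_modByMonic, Polynomial.coeff_smul,
      smul_eq_mul]

lemma eFrac_eq_Lcg {g : Polynomial F} (hg : g.Monic) (c f : Polynomial F) :
    eFrac (c * f) g = eChar F (Lcg c g f) := by
  rw [eFrac, ← Polynomial.modByMonic_eq_mod _ hg]
  rfl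

lemma monic_aux (n : ℕ) (w : Fin n → F) :
    (X ^ n + ((Polynomial.degreeLTEquiv F n).symm w : Polynomial F)).Monic ∧
      (X ^ n + ((Polynomial.degreeLTEquiv F n).symm w : Polynomial F)).natDegree = n := by
  set v : Polynomial F := ((Polynomial.degreeLTEquiv F n).symm w : Polynomial F) with hv
  have hdeg : v.degree < (n : WithBot ℕ) :=
    Polynomial.mem_degreeLT.mp ((Polynomial.degreeLTEquiv F n).symm w).2
  have hm : (X ^ n + v).Monic := Polynomial.monic_X_pow_add hdeg
  refine ⟨hm, ?_⟩
  have hd : (X ^ n + v).degree = (n : WithBot ℕ) := by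
    rw [Polynomial.degree_add_eq_left_of_degree_lt (by rwa [Polynomial.degree_X_pow]),
      Polynomial.degree_X_pow]
  exact Polynomial.natDegree_eq_of_degree_eq_some hd

lemma monicSet_eq_image (n : ℕ) :
    {f : Polynomial F | f.Monic ∧ f.natDegree = n} =
      (fun w : Fin n → F =>
        X ^ n + ((Polynomial.degreeLTEquiv F n).symm w : Polynomial F)) '' Set.univ := by
  ext f
  simp only [Set.mem_setOf_eq, Set.image_univ, Set.mem_range]
  constructor
  · rintro ⟨hf, hfn⟩
    have hdeg : (f - X ^ n).degree < (n : WithBot ℕ) := by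
      have h1 : f.degree = (X ^ n : Polynomial F).degree := by
        rw [Polynomial.degree_X_pow, Polynomial.degree_eq_natDegree hf.ne_zero, hfn]
      have h2 := Polynomial.degree_sub_lt h1 hf.ne_zero
        (by rw [hf.leadingCoeff, Polynomial.leadingCoeff_X_pow])
      rwa [Polynomial.degree_eq_natDegree hf.ne_zero, hfn] at h2
    refine ⟨Polynomial.degreeLTEquiv F n ⟨f - X ^ n, Polynomial.mem_degreeLT.mpr hdeg⟩, ?_⟩
    rw [LinearEquiv.symm_apply_apply]
    simp
  · rintro ⟨w, rfl⟩
    exact monic_aux n w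

lemma finsum_monic_eq_sum (n : ℕ) (φ : Polynomial F → ℂ) :
    (∑ᶠ f ∈ {f : Polynomial F | f.Monic ∧ f.natDegree = n}, φ f) =
      ∑ w : Fin n → F, φ (X ^ n + ((Polynomial.degreeLTEquiv F n).symm w : Polynomial F)) := by
  have hinj : Set.InjOn
      (fun w : Fin n → F => X ^ n + ((Polynomial.degreeLTEquiv F n).symm w : Polynomial F))
      Set.univ := by
    intro w1 _ w2 _ h
    exact (Polynomial.degreeLTEquiv F n).symm.injective
      (Subtype.coe_injective (add_left_cancel h))
  rw [monicSet_eq_image n, finsum_mem_image hinj, finsum_mem_univ, finsum_eq_sum_of_fintype]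

lemma coeffSum_vanish {g c : Polynomial F} (hg : g.Monic) (hc0 : c ≠ 0)
    (hcdeg : c.degree < g.degree) (n : ℕ) (hn : g.natDegree - c.natDegree - 1 < n) :
    (∑ᶠ f ∈ {f : Polynomial F | f.Monic ∧ f.natDegree = n}, eFrac (c * f) g) = 0 := by
  have hmd : c.natDegree < g.natDegree := Polynomial.natDegree_lt_natDegree hc0 hcdeg
  set d := g.natDegree with hd
  set m := c.natDegree with hm
  set L' : (Fin n → F) →ₗ[F] F :=
    (Lcg c g).comp ((Polynomial.degreeLT F n).subtype.comp
      ((Polynomial.degreeLTEquiv F n).symm : (Fin n → F) ≃ₗ[F] _).toLinearMap) with hL'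
  have hLval : Lcg c g (X ^ (d - m - 1)) = c.leadingCoeff := by
    have hdeg : (c * X ^ (d - m - 1)).degree < g.degree := by
      rw [Polynomial.degree_mul, Polynomial.degree_X_pow,
        Polynomial.degree_eq_natDegree hc0, Polynomial.degree_eq_natDegree hg.ne_zero, ← hm, ← hd]
      exact_mod_cast (by omega : m + (d - m - 1) < d)
    show ((c * X ^ (d - m - 1)) %ₘ g).coeff (d - 1) = c.leadingCoeff
    rw [(Polynomial.modByMonic_eq_self_iff hg).mpr hdeg,
      show d - 1 = m + (d - m - 1) by omega, Polynomial.coeff_mul_X_pow]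
    exact Polynomial.coeff_natDegree
  have hXmem : (X ^ (d - m - 1) : Polynomial F) ∈ Polynomial.degreeLT F n := by
    rw [Polynomial.mem_degreeLT, Polynomial.degree_X_pow]
    exact_mod_cast hn
  have hL'ne : L' ≠ 0 := by
    intro h0
    have : L' (Polynomial.degreeLTEquiv F n ⟨X ^ (d - m - 1), hXmem⟩) = c.leadingCoeff := by
      simp only [hL', LinearMap.comp_apply, LinearEquiv.coe_toLinearMap,
        LinearEquiv.symm_apply_apply, Submodule.coe_subtype]
      exact hLval
    rw [h0] at this
    exact Polynomial.leadingCoeff_ne_zero.mpr hc0 this.symm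
  rw [finsum_monic_eq_sum]
  calc ∑ w : Fin n → F,
        eFrac (c * (X ^ n + ((Polynomial.degreeLTEquiv F n).symm w : Polynomial F))) g
      = ∑ w : Fin n → F, eChar F (Lcg c g (X ^ n)) * eChar F (L' w) := by
        refine Finset.sum_congr rfl fun w _ => ?_
        rw [eFrac_eq_Lcg hg, map_add, eChar_add]
        rfl
    _ = eChar F (Lcg c g (X ^ n)) * ∑ w : Fin n → F, eChar F (L' w) := by
        rw [Finset.mul_sum]
    _ = 0 := by rw [sum_eChar_linear L' hL'ne, mul_zero]

lemma eFrac_of_small {g c : Polynomial F} (hg : g.Monic) (hc0 : c ≠ 0)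
    {f : Polynomial F} (hf : f.Monic) {k : ℕ} (hfk : f.natDegree = k)
    (hk : c.natDegree + k < g.natDegree) :
    eFrac (c * f) g =
      if c.natDegree + k + 1 = g.natDegree then eChar F c.leadingCoeff else 1 := by
  have hcf0 : c * f ≠ 0 := mul_ne_zero hc0 hf.ne_zero
  have hnd : (c * f).natDegree = c.natDegree + k := by
    rw [Polynomial.natDegree_mul hc0 hf.ne_zero, hfk]
  have hdeg : (c * f).degree < g.degree := by
    rw [Polynomial.degree_eq_natDegree hcf0, Polynomial.degree_eq_natDegree hg.ne_zero, hnd]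
    exact_mod_cast hk
  rw [eFrac, ← Polynomial.modByMonic_eq_mod _ hg, (Polynomial.modByMonic_eq_self_iff hg).mpr hdeg]
  split_ifs with h
  · rw [show g.natDegree - 1 = (c * f).natDegree by omega, Polynomial.coeff_natDegree,
      Polynomial.leadingCoeff_mul, hf.leadingCoeff, mul_one]
  · rw [Polynomial.coeff_eq_zero_of_natDegree_lt (by omega), eChar_zero]

lemma coeffSum_small {g c : Polynomial F} (hg : g.Monic) (hc0 : c ≠ 0)
    (k : ℕ) (hk : c.natDegree + k < g.natDegree) :
    (∑ᶠ f ∈ {f : Polynomial F | f.Monic ∧ f.natDegree = k}, eFrac (c * f) g) =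
      (Fintype.card F : ℂ) ^ k *
        (if c.natDegree + k + 1 = g.natDegree then eChar F c.leadingCoeff else 1) := by
  rw [finsum_monic_eq_sum]
  have hterm : ∀ w : Fin k → F,
      eFrac (c * (X ^ k + ((Polynomial.degreeLTEquiv F k).symm w : Polynomial F))) g =
        if c.natDegree + k + 1 = g.natDegree then eChar F c.leadingCoeff else 1 := fun w =>
    eFrac_of_small hg hc0 (monic_aux k w).1 (monic_aux k w).2 hk
  rw [Finset.sum_congr rfl fun w _ => hterm w, Finset.sum_const, Finset.card_univ,
    nsmul_eq_mul]
  congr 1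
  rw [show Fintype.card (Fin k → F) = Fintype.card F ^ k by
    simp [Fintype.card_fun]]
  push_cast
  ring

end AuxEstermann

/-- **Closed form for the degree-one Estermann function over `𝔽_q[T]`:**
the coefficient sums `Σ_{f ∈ M_n} e(cf/g)` vanish for `n > deg g - deg c - 1`, so the
series `D_1(u; c/g)` is a polynomial in `u`, and it equals
`(qu)^{deg g - deg c - 1}(e_q(sgn c) - 1/(1-qu)) + 1/(1-qu)` whenever `qu ≠ 1`. -/
theorem estermannD1_closed_form
    (F : Type) [Field F] [Fintype F] (q : ℕ) (hq : q = Fintype.card F)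
    (g : Polynomial F) (hg : g.Monic) (c : Polynomial F)
    (hc0 : c ≠ 0) (hcdeg : c.degree < g.degree) :
    (∀ n : ℕ, g.natDegree - c.natDegree - 1 < n →
      (∑ᶠ f ∈ {f : Polynomial F | f.Monic ∧ f.natDegree = n}, eFrac (c * f) g) = 0) ∧
    ∀ u : ℂ, (q : ℂ) * u ≠ 1 →
      (∑ k ∈ Finset.range (g.natDegree - c.natDegree),
        (∑ᶠ f ∈ {f : Polynomial F | f.Monic ∧ f.natDegree = k}, eFrac (c * f) g) * u ^ k) =
      ((q : ℂ) * u) ^ (g.natDegree - c.natDegree - 1) *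
        (eChar F c.leadingCoeff - 1 / (1 - (q : ℂ) * u)) + 1 / (1 - (q : ℂ) * u) := by
  subst hq
  have hmd : c.natDegree < g.natDegree := Polynomial.natDegree_lt_natDegree hc0 hcdeg
  constructor
  · exact fun n hn => coeffSum_vanish hg hc0 hcdeg n hn
  · intro u hu
    set q : ℕ := Fintype.card F with hqdef
    set d := g.natDegree with hd
    set m := c.natDegree with hm
    set N := d - m - 1 with hN
    have hrange : d - m = N + 1 := by omega
    have hlast : (∑ᶠ f ∈ {f : Polynomial F | f.Monic ∧ f.natDegree = N}, eFrac (c * f) g) =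
        (q : ℂ) ^ N * eChar F c.leadingCoeff := by
      rw [coeffSum_small hg hc0 N (by omega), if_pos (by omega)]
    have h1u : (1 : ℂ) - q * u ≠ 0 := fun h => hu (sub_eq_zero.mp h).symm
    have h1u' : (q : ℂ) * u - 1 ≠ 0 := fun h => hu (sub_eq_zero.mp h)
    rw [hrange, Finset.sum_range_succ, hlast,
      Finset.sum_congr rfl (fun k hk => by
        rw [coeffSum_small hg hc0 k (by have := Finset.mem_range.mp hk; omega),
          if_neg (by have := Finset.mem_range.mp hk; omega), mul_one, ← mul_pow]),
      geom_sum_eq hu N]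
    field_simp
    ring
end

section
/- Let g ∈ 𝔽_q[T] be monic and c ∈ 𝔽_q[T]. Then for every u ∈ ℂ with |u| < 1/q, D_2(u;c/g) = Σ_a Z(u;a,g)·D_1(u;ac/g), where a runs over all polynomials in 𝔽_q[T] of degree < deg g. If moreover gcd(c,g) = 1, c̄ is any multiplicative inverse of c modulo g, and b ∈ 𝔽_q[T], then D_2(u;bc̄/g) = Σ_a Z(u;ac,g)·D_1(u;ab/g), with a running over the same set. -/
open Polynomial
open scoped Classical

set_option linter.unusedSectionVars false
set_option maxHeartbeats 1000000

noncomputable section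
variable {F : Type} [Field F] [Fintype F]


lemma norm_eChar (y : F) : ‖eChar F y‖ = 1 := by
  rw [eChar, Complex.norm_exp]
  convert Real.exp_zero using 2
  simp [Complex.div_re, Complex.div_im]

lemma norm_eFrac (a g : Polynomial F) : ‖eFrac a g‖ = 1 := norm_eChar _

lemma mod_eq_modByMonic {g : Polynomial F} (hg : g.Monic) (p : Polynomial F) :
    p % g = p %ₘ g := by
  rw [Polynomial.mod_def, hg.leadingCoeff, inv_one, map_one, mul_one]

lemma mod_congr {g : Polynomial F} (hg : g.Monic) {x y : Polynomial F} (h : g ∣ x - y) :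
    x % g = y % g := by
  rw [mod_eq_modByMonic hg, mod_eq_modByMonic hg]
  have h0 : (x - y) %ₘ g = 0 := (Polynomial.modByMonic_eq_zero_iff_dvd hg).mpr h
  rw [Polynomial.sub_modByMonic] at h0
  exact sub_eq_zero.mp h0

lemma eFrac_congr {g : Polynomial F} (hg : g.Monic) {x y : Polynomial F} (h : g ∣ x - y) :
    eFrac x g = eFrac y g := by
  unfold eFrac; rw [mod_congr hg h]

lemma mod_self_of_deg_lt {g : Polynomial F} (hg : g.Monic) {a : Polynomial F}
    (h : a.degree < g.degree) : a % g = a := by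
  rw [mod_eq_modByMonic hg, (Polynomial.modByMonic_eq_self_iff hg).mpr h]

lemma deg_mod_lt {g : Polynomial F} (hg : g.Monic) (p : Polynomial F) :
    (p % g).degree < g.degree := by
  rw [mod_eq_modByMonic hg]; exact Polynomial.degree_modByMonic_lt p hg

lemma dvd_sub_mod {g : Polynomial F} (p : Polynomial F) : g ∣ p - p % g :=
  ⟨p / g, by rw [EuclideanDomain.mod_eq_sub_mul_div]; ring⟩

lemma dvd_sub_of_mod_eq {g : Polynomial F} {x y : Polynomial F} (h : x % g = y % g) :
    g ∣ x - y := by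
  have h1 := dvd_sub_mod (g := g) x
  have h2 := dvd_sub_mod (g := g) y
  have h3 : x - y = (x - x % g) - (y - y % g) := by rw [h]; ring
  rw [h3]; exact dvd_sub h1 h2

lemma finite_deg_lt_nat (N : ℕ) : {a : Polynomial F | a.degree < (N : WithBot ℕ)}.Finite := by
  apply Set.Finite.of_finite_image (f := fun a => (fun i : Fin N => a.coeff i))
  · exact Set.toFinite _
  · intro a ha b hb hab
    ext i
    rcases lt_or_ge i N with hi | hi
    · exact congrFun hab ⟨i, hi⟩
    · rw [Polynomial.coeff_eq_zero_of_degree_lt (lt_of_lt_of_le ha (Nat.cast_le.mpr hi)),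
        Polynomial.coeff_eq_zero_of_degree_lt (lt_of_lt_of_le hb (Nat.cast_le.mpr hi))]

lemma finite_deg_lt (g : Polynomial F) (hg : g ≠ 0) :
    {a : Polynomial F | a.degree < g.degree}.Finite := by
  apply (finite_deg_lt_nat g.natDegree).subset
  intro a ha
  simpa [Polynomial.degree_eq_natDegree hg] using ha

lemma finite_monic_divisors {f : Polynomial F} (hf : f ≠ 0) :
    {d : Polynomial F | d.Monic ∧ d ∣ f}.Finite := by
  apply (finite_deg_lt_nat (f.natDegree + 1)).subset
  intro d ⟨_, hd⟩
  calc d.degree ≤ f.degree := Polynomial.degree_le_of_dvd hd hf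
    _ ≤ (f.natDegree : WithBot ℕ) := Polynomial.degree_le_natDegree
    _ < ((f.natDegree + 1 : ℕ) : WithBot ℕ) := by exact_mod_cast Nat.lt_succ_self _

lemma monic_inj : Function.Injective
    (fun f : {f : Polynomial F // f.Monic} =>
      (⟨(f : Polynomial F).natDegree, fun j : Fin (f : Polynomial F).natDegree =>
        (f : Polynomial F).coeff j⟩ : Σ n : ℕ, (Fin n → F))) := by
  intro f g h
  simp only at h
  obtain ⟨h1, h2⟩ := Sigma.ext_iff.mp h
  simp only at h1 h2
  have h2' := (Fin.heq_fun_iff h1).mp h2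
  apply Subtype.ext
  apply Polynomial.ext
  intro j
  rcases lt_trichotomy j (f : Polynomial F).natDegree with hj | hj | hj
  · simpa using h2' ⟨j, hj⟩
  · subst hj
    rw [f.2.coeff_natDegree, h1, g.2.coeff_natDegree]
  · rw [Polynomial.coeff_eq_zero_of_natDegree_lt hj,
      Polynomial.coeff_eq_zero_of_natDegree_lt (h1 ▸ hj)]

lemma summable_monic_pow {r : ℝ} (hr0 : 0 ≤ r) (hr : (Fintype.card F : ℝ) * r < 1) :
    Summable (fun f : {f : Polynomial F // f.Monic} => r ^ (f : Polynomial F).natDegree) := by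
  have hs : Summable (fun p : Σ n : ℕ, (Fin n → F) => r ^ p.1) := by
    rw [summable_sigma_of_nonneg (fun _ => pow_nonneg hr0 _)]
    constructor
    · intro n; exact Summable.of_finite
    · have : (fun n : ℕ => ∑' _ : Fin n → F, r ^ n) =
          fun n : ℕ => ((Fintype.card F : ℝ) * r) ^ n := by
        funext n
        rw [tsum_fintype]
        simp [Finset.sum_const, Fintype.card_fun, mul_pow, nsmul_eq_mul]
      rw [this]
      exact summable_geometric_of_lt_one (by positivity) hr
  have h2 := hs.comp_injective monic_inj
  exact h2

lemma quot_monic {h f : Polynomial F} (hh : h.Monic) (hf : f.Monic) (hdvd : h ∣ f) :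
    (f / h).Monic ∧ h * (f / h) = f := by
  have hmul : h * (f / h) = f := EuclideanDomain.mul_div_cancel' hh.ne_zero hdvd
  refine ⟨?_, hmul⟩
  have hlc := congrArg Polynomial.leadingCoeff hmul
  rw [Polynomial.leadingCoeff_mul, hh.leadingCoeff, one_mul, hf.leadingCoeff] at hlc
  exact hlc

def fiberEquiv (f0 : Polynomial F) (hf0 : f0.Monic) :
    {p : {h : Polynomial F // h.Monic} × {k : Polynomial F // k.Monic} //
      (p.1 : Polynomial F) * (p.2 : Polynomial F) = f0} ≃
    {d : Polynomial F | d.Monic ∧ d ∣ f0} where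
  toFun p := ⟨p.1.1.1, p.1.1.2, ⟨p.1.2.1, p.2.symm⟩⟩
  invFun d := ⟨(⟨d.1, d.2.1⟩, ⟨f0 / d.1, (quot_monic d.2.1 hf0 d.2.2).1⟩),
    (quot_monic d.2.1 hf0 d.2.2).2⟩
  left_inv p := by
    obtain ⟨⟨h, k⟩, hp⟩ := p
    apply Subtype.ext
    refine Prod.ext rfl (Subtype.ext ?_)
    have hq := (quot_monic h.2 (hp ▸ (h.2.mul k.2)) ⟨k.1, hp.symm⟩).2
    exact mul_left_cancel₀ h.2.ne_zero (hq.trans hp.symm)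
  right_inv d := rfl

lemma tsum_const_finite {α : Type} [Finite α] (C : ℂ) :
    ∑' _ : α, C = (Nat.card α : ℂ) * C := by
  letI := Fintype.ofFinite α
  rw [tsum_fintype]
  simp [Finset.sum_const, Nat.card_eq_fintype_card, nsmul_eq_mul]

lemma part1 (g : Polynomial F) (hg : g.Monic) (c : Polynomial F) (u : ℂ)
    (hr : (Fintype.card F : ℝ) * ‖u‖ < 1) :
    monicSeries (fun f => (dCount f : ℂ) * eFrac (c * f) g) u =
      ∑ᶠ a ∈ {a : Polynomial F | a.degree < g.degree},
        monicSeries (fun f => if f % g = a % g then (1 : ℂ) else 0) u *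
          monicSeries (fun f => eFrac (a * c * f) g) u := by
  set M := {f : Polynomial F // f.Monic} with hM
  set r := ‖u‖ with hrdef
  have hr0 : 0 ≤ r := norm_nonneg u
  have hMsum : Summable (fun f : M => r ^ (f : Polynomial F).natDegree) :=
    summable_monic_pow hr0 hr
  -- generic bound
  have hbound : ∀ c' : M → ℂ, (∀ x, ‖c' x‖ ≤ 1) →
      Summable (fun x : M => ‖c' x * u ^ (x : Polynomial F).natDegree‖) := by
    intro c' hc'
    refine Summable.of_nonneg_of_le (fun _ => norm_nonneg _) (fun x => ?_) hMsum
    rw [norm_mul, norm_pow]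
    calc ‖c' x‖ * ‖u‖ ^ (x : Polynomial F).natDegree
        ≤ 1 * ‖u‖ ^ (x : Polynomial F).natDegree := by
          apply mul_le_mul_of_nonneg_right (hc' x) (by positivity)
      _ = r ^ (x : Polynomial F).natDegree := one_mul _
  -- the pair function
  set P : M × M → ℂ := fun p =>
    eFrac (c * ((p.1 : Polynomial F) * (p.2 : Polynomial F))) g *
      u ^ ((p.1 : Polynomial F) * (p.2 : Polynomial F)).natDegree with hPdef
  have hprodsum : Summable (fun p : M × M =>
      r ^ (p.1 : Polynomial F).natDegree * r ^ (p.2 : Polynomial F).natDegree) :=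
    hMsum.mul_of_nonneg hMsum (fun _ => pow_nonneg hr0 _) (fun _ => pow_nonneg hr0 _)
  have hP : Summable P := by
    apply Summable.of_norm_bounded hprodsum
    intro p
    rw [hPdef]
    simp only
    rw [norm_mul, norm_eFrac, one_mul, norm_pow,
      Polynomial.natDegree_mul p.1.2.ne_zero p.2.2.ne_zero, pow_add]
  -- Step 1: fiberwise over the multiplication map
  set m : M × M → M := fun p => ⟨(p.1 : Polynomial F) * (p.2 : Polynomial F),
    p.1.2.mul p.2.2⟩ with hmdef
  have hsig : Summable (fun x : Σ f0 : M, {p : M × M // m p = f0} => P x.2.1) := by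
    have h := (Equiv.sigmaFiberEquiv m).summable_iff.mpr hP
    exact h
  have h_eq1 : ∑' x : Σ f0 : M, {p : M × M // m p = f0}, P x.2.1 = ∑' p : M × M, P p := by
    have h := Equiv.tsum_eq (Equiv.sigmaFiberEquiv m) P
    exact h
  have h_eq2 : ∑' x : Σ f0 : M, {p : M × M // m p = f0}, P x.2.1
      = ∑' f0 : M, ∑' pc : {p : M × M // m p = f0}, P pc.1 := Summable.tsum_sigma hsig
  have hinner : ∀ f0 : M, ∑' pc : {p : M × M // m p = f0}, P pc.1
      = ((dCount (f0 : Polynomial F) : ℂ) * eFrac (c * (f0 : Polynomial F)) g) *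
        u ^ (f0 : Polynomial F).natDegree := by
    intro f0
    have ebridge : {p : M × M // m p = f0} ≃
        {p : M × M // (p.1 : Polynomial F) * (p.2 : Polynomial F) = (f0 : Polynomial F)} :=
      Equiv.subtypeEquivRight (fun p => ⟨fun h => congrArg Subtype.val h,
        fun h => Subtype.ext h⟩)
    have ecard := ebridge.trans (fiberEquiv (f0 : Polynomial F) f0.2)
    haveI : Finite ↥{d : Polynomial F | d.Monic ∧ d ∣ (f0 : Polynomial F)} :=
      (finite_monic_divisors f0.2.ne_zero).to_subtype
    haveI : Finite {p : M × M // m p = f0} := Finite.of_equiv _ ecard.symm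
    have hconst : ∀ pc : {p : M × M // m p = f0}, P pc.1
        = eFrac (c * (f0 : Polynomial F)) g * u ^ (f0 : Polynomial F).natDegree := by
      intro pc
      have hval : (pc.1.1 : Polynomial F) * (pc.1.2 : Polynomial F) = (f0 : Polynomial F) :=
        congrArg Subtype.val pc.2
      rw [hPdef]
      simp only
      rw [hval]
    rw [tsum_congr hconst, tsum_const_finite, Nat.card_congr ecard, Nat.card_coe_set_eq]
    have hdc : {d : Polynomial F | d.Monic ∧ d ∣ (f0 : Polynomial F)}.ncard
        = dCount (f0 : Polynomial F) := rfl
    rw [hdc, mul_assoc]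
  -- Step 2 : grouping by residue of the first factor
  have hgne : g ≠ 0 := hg.ne_zero
  have hSfin : {a : Polynomial F | a.degree < g.degree}.Finite := finite_deg_lt g hgne
  set T := hSfin.toFinset with hTdef
  set zf : Polynomial F → M → ℂ := fun a h =>
    (if (h : Polynomial F) % g = a % g then (1 : ℂ) else 0) *
      u ^ (h : Polynomial F).natDegree with hzf
  set df : Polynomial F → M → ℂ := fun a k =>
    eFrac (a * c * (k : Polynomial F)) g * u ^ (k : Polynomial F).natDegree with hdf
  have hznorm : ∀ a : Polynomial F, Summable fun h : M => ‖zf a h‖ := by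
    intro a
    have h := hbound (fun h : M => if (h : Polynomial F) % g = a % g then (1 : ℂ) else 0)
      (fun x => by split_ifs <;> simp)
    exact h
  have hdnorm : ∀ a : Polynomial F, Summable fun k : M => ‖df a k‖ := by
    intro a
    have h := hbound (fun k : M => eFrac (a * c * (k : Polynomial F)) g)
      (fun x => le_of_eq (norm_eFrac _ _))
    exact h
  have hzdsum : ∀ a : Polynomial F, Summable (fun p : M × M => zf a p.1 * df a p.2) := by
    intro a
    apply Summable.of_norm_bounded ((hznorm a).mul_of_nonneg (hdnorm a)
      (fun _ => norm_nonneg _) (fun _ => norm_nonneg _))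
    intro p
    rw [norm_mul]
  have hpoint : ∀ p : M × M, (∑ a ∈ T, zf a p.1 * df a p.2) = P p := by
    intro p
    obtain ⟨h, k⟩ := p
    have ha0T : (h : Polynomial F) % g ∈ T := by
      rw [hTdef, Set.Finite.mem_toFinset]
      exact deg_mod_lt hg _
    have step : ∀ a ∈ T, zf a h * df a k
        = if (h : Polynomial F) % g = a then
            u ^ (h : Polynomial F).natDegree *
              (eFrac (a * c * (k : Polynomial F)) g * u ^ (k : Polynomial F).natDegree)
          else 0 := by
      intro a haT
      rw [hTdef, Set.Finite.mem_toFinset] at haT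
      rw [hzf, hdf]
      simp only
      rw [mod_self_of_deg_lt hg haT]
      split_ifs with hc
      · ring
      · ring
    rw [Finset.sum_congr rfl step, Finset.sum_ite_eq T ((h : Polynomial F) % g) _,
      if_pos ha0T]
    have h1 : g ∣ (c * (k : Polynomial F)) * ((h : Polynomial F) - (h : Polynomial F) % g) :=
      (dvd_sub_mod _).mul_left _
    have h2 : ((h : Polynomial F) % g) * c * (k : Polynomial F)
        - c * ((h : Polynomial F) * (k : Polynomial F))
        = -((c * (k : Polynomial F)) * ((h : Polynomial F) - (h : Polynomial F) % g)) := by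
      ring
    have h3 : g ∣ ((h : Polynomial F) % g) * c * (k : Polynomial F)
        - c * ((h : Polynomial F) * (k : Polynomial F)) := by
      rw [h2]; exact dvd_neg.mpr h1
    rw [hPdef]
    simp only
    rw [eFrac_congr hg h3, Polynomial.natDegree_mul h.2.ne_zero k.2.ne_zero, pow_add]
    ring
  have hexch : ∑ a ∈ T, (∑' h : M, zf a h) * (∑' k : M, df a k) = ∑' p : M × M, P p := by
    have h1 : ∀ a ∈ T, (∑' h : M, zf a h) * (∑' k : M, df a k)
        = ∑' p : M × M, zf a p.1 * df a p.2 := fun a _ =>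
      tsum_mul_tsum_of_summable_norm (hznorm a) (hdnorm a)
    rw [Finset.sum_congr rfl h1, ← Summable.tsum_finsetSum (fun a _ => hzdsum a)]
    exact tsum_congr hpoint
  calc monicSeries (fun f => (dCount f : ℂ) * eFrac (c * f) g) u
      = ∑' f0 : M, ((dCount (f0 : Polynomial F) : ℂ) * eFrac (c * (f0 : Polynomial F)) g) *
          u ^ (f0 : Polynomial F).natDegree := rfl
    _ = ∑' p : M × M, P p := by
        rw [← h_eq1, h_eq2]
        exact (tsum_congr hinner).symm
    _ = ∑ a ∈ T, (∑' h : M, zf a h) * (∑' k : M, df a k) := hexch.symm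
    _ = ∑ᶠ a ∈ {a : Polynomial F | a.degree < g.degree},
        monicSeries (fun f => if f % g = a % g then (1 : ℂ) else 0) u *
          monicSeries (fun f => eFrac (a * c * f) g) u := by
        rw [finsum_mem_eq_finite_toFinset_sum _ hSfin]
        rfl


end

/-- **`D_2` as a bilinear combination of `Z` and `D_1`:** for `|u| < 1/q`,
`D_2(u;c/g) = Σ_{deg a < deg g} Z(u;a,g)·D_1(u;ac/g)`, and, when `gcd(c,g) = 1` with
`c̄` an inverse of `c` mod `g`, `D_2(u;bc̄/g) = Σ_{deg a < deg g} Z(u;ac,g)·D_1(u;ab/g)`. -/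
theorem estermannD2_bilinear
    (F : Type) [Field F] [Fintype F] (q : ℕ) (hq : q = Fintype.card F)
    (g : Polynomial F) (hg : g.Monic) (c : Polynomial F)
    (u : ℂ) (hu : ‖u‖ < 1 / q) :
    (monicSeries (fun f => (dCount f : ℂ) * eFrac (c * f) g) u =
      ∑ᶠ a ∈ {a : Polynomial F | a.degree < g.degree},
        monicSeries (fun f => if f % g = a % g then (1 : ℂ) else 0) u *
          monicSeries (fun f => eFrac (a * c * f) g) u) ∧
    (IsCoprime c g → ∀ cbar : Polynomial F, g ∣ c * cbar - 1 → ∀ b : Polynomial F,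
      monicSeries (fun f => (dCount f : ℂ) * eFrac (b * cbar * f) g) u =
        ∑ᶠ a ∈ {a : Polynomial F | a.degree < g.degree},
          monicSeries (fun f => if f % g = (a * c) % g then (1 : ℂ) else 0) u *
            monicSeries (fun f => eFrac (a * b * f) g) u) := by
  have hq0 : 0 < (q : ℝ) := by
    rw [hq]; exact_mod_cast Fintype.card_pos
  have hr : (Fintype.card F : ℝ) * ‖u‖ < 1 := by
    rw [← hq, mul_comm]; exact (lt_div_iff₀ hq0).mp hu
  constructor
  · exact part1 g hg c u hr
  · intro _ cbar hcbar b
    rw [part1 g hg (b * cbar) u hr]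
    set S : Set (Polynomial F) := {a : Polynomial F | a.degree < g.degree} with hS
    have hSfin : S.Finite := finite_deg_lt g hg.ne_zero
    set e : Polynomial F → Polynomial F := fun a => (a * c) % g with he
    have hmaps : Set.MapsTo e S S := fun a _ => deg_mod_lt hg _
    have hinj : Set.InjOn e S := by
      intro a1 h1 a2 h2 heq
      have hd : g ∣ a1 * c - a2 * c := dvd_sub_of_mod_eq heq
      have hd2 : g ∣ a1 - a2 := by
        have h5 : g ∣ (a1 * c - a2 * c) * cbar := hd.mul_right _
        have h6 : g ∣ (c * cbar - 1) * (a1 - a2) := hcbar.mul_right _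
        have h7 : a1 - a2 = (a1 * c - a2 * c) * cbar - (c * cbar - 1) * (a1 - a2) := by ring
        rw [h7]; exact dvd_sub h5 h6
      have h8 : (a1 - a2).degree < g.degree :=
        lt_of_le_of_lt (Polynomial.degree_sub_le _ _) (max_lt h1 h2)
      exact sub_eq_zero.mp (Polynomial.eq_zero_of_dvd_of_degree_lt hd2 h8)
    have hbij : Set.BijOn e S S := (hSfin.injOn_iff_bijOn_of_mapsTo hmaps).mp hinj
    refine (finsum_mem_eq_of_bijOn e hbij ?_).symm
    intro a _
    have hz : (fun f : Polynomial F => if f % g = (e a) % g then (1 : ℂ) else 0)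
        = fun f : Polynomial F => if f % g = (a * c) % g then (1 : ℂ) else 0 := by
      rw [he]
      simp only
      rw [mod_self_of_deg_lt hg (deg_mod_lt hg _)]
    have hd : (fun f : Polynomial F => eFrac (e a * (b * cbar) * f) g)
        = fun f : Polynomial F => eFrac (a * b * f) g := by
      funext f
      apply eFrac_congr hg
      have hd1 : g ∣ a * c - (a * c) % g := dvd_sub_mod _
      have h9 : e a * (b * cbar) * f - a * b * f
          = -((a * c - (a * c) % g) * (b * (cbar * f))) + (c * cbar - 1) * (a * (b * f)) := by
        rw [he]; ring
      rw [h9]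
      exact dvd_add (dvd_neg.mpr (hd1.mul_right _)) (hcbar.mul_right _)
    rw [← hz, ← hd]
end

section
/- (Voronoi summation formula for the divisor function over 𝔽_q[T].) Let n ≥ 0, let g ∈ 𝔽_q[T] be monic with deg g ≤ n/2, and c ∈ 𝔽_q[T] with gcd(c,g) = 1; let c̄ be any multiplicative inverse of c modulo g. Set μ := 2·deg g − n − 2. Then Σ_{f ∈ M_n} d(f)·e(cf/g) = q^n·(n + 1 − 2·deg g)/|g| + (q^n/|g|) · Σ_{λ ∈ 𝔽_q^×} Σ_{η₁,η₂ ∈ {0,1}} Σ_{0 ≤ k ≤ μ} b_{μ−k}(λ,η₁,η₂) · Σ_{f ∈ M_k} d(f)·e(λc̄f/g), where b_k(λ,η₁,η₂) := (−1)^{k−η₁−η₂}·Kl_2(η₁−1, (1−η₂)λ)·1_{k ≥ η₁+η₂}·C(−η₁−η₂, k−η₁−η₂), and the second term is 0 when μ < 0. -/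
open Polynomial
open scoped Classical

noncomputable section
namespace Vrn
variable {F : Type} [Field F] [Fintype F]

lemma pPrime (F : Type) [Field F] [Fintype F] : (ringChar F).Prime :=
  CharP.char_is_prime F (ringChar F)

lemma exp_mod {p : ℕ} (hp : p ≠ 0) (m : ℕ) :
    Complex.exp (2 * Real.pi * Complex.I * ((m % p : ℕ) : ℂ) / p) =
    Complex.exp (2 * Real.pi * Complex.I * (m : ℂ) / p) := by
  have hpc : (p : ℂ) ≠ 0 := Nat.cast_ne_zero.mpr hp
  conv_rhs => rw [← Nat.mod_add_div m p]
  have : (2 * Real.pi * Complex.I * ((m % p + p * (m / p) : ℕ) : ℂ) / p)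
      = 2 * Real.pi * Complex.I * ((m % p : ℕ) : ℂ) / p
        + ((m / p : ℕ) : ℂ) * (2 * Real.pi * Complex.I) := by
    push_cast
    field_simp
  rw [this, Complex.exp_add]
  have h1 : Complex.exp (((m / p : ℕ) : ℂ) * (2 * Real.pi * Complex.I)) = 1 := by
    have := Complex.exp_int_mul_two_pi_mul_I (m / p : ℕ)
    simpa using this
  rw [h1, mul_one]

lemma eChar_zero : eChar F 0 = 1 := by
  letI : Algebra (ZMod (ringChar F)) F := ZMod.algebra F (ringChar F)
  simp [eChar]

lemma eChar_add (x y : F) : eChar F (x + y) = eChar F x * eChar F y := by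
  letI : Algebra (ZMod (ringChar F)) F := ZMod.algebra F (ringChar F)
  have hp : (ringChar F) ≠ 0 := (pPrime F).ne_zero
  haveI : NeZero (ringChar F) := ⟨hp⟩
  unfold eChar
  rw [map_add, ← Complex.exp_add]
  set a := Algebra.trace (ZMod (ringChar F)) F x
  set b := Algebra.trace (ZMod (ringChar F)) F y
  have hval : (a + b).val = (a.val + b.val) % ringChar F := ZMod.val_add a b
  rw [hval]
  have := exp_mod hp (a.val + b.val)
  push_cast at this ⊢
  rw [this]
  congr 1
  field_simp

lemma eChar_ne_one : ∃ y : F, eChar F y ≠ 1 := by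
  letI : Algebra (ZMod (ringChar F)) F := ZMod.algebra F (ringChar F)
  have hp : (ringChar F).Prime := pPrime F
  obtain ⟨b, hb⟩ := FiniteField.trace_to_zmod_nondegenerate F (one_ne_zero (α := F))
  rw [one_mul] at hb
  refine ⟨b, ?_⟩
  intro hcontra
  unfold eChar at hcontra
  set t := Algebra.trace (ZMod (ringChar F)) F b with ht
  rw [Complex.exp_eq_one_iff] at hcontra
  obtain ⟨k, hk⟩ := hcontra
  have hpc : ((ringChar F : ℕ) : ℂ) ≠ 0 := Nat.cast_ne_zero.mpr hp.ne_zero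
  have h2 : (2 * Real.pi * Complex.I : ℂ) ≠ 0 := Complex.two_pi_I_ne_zero
  haveI : NeZero (ringChar F) := ⟨hp.ne_zero⟩
  have h3 : (2 * (Real.pi : ℂ) * Complex.I) * (t.val : ℂ)
      = (2 * (Real.pi : ℂ) * Complex.I) * ((k : ℂ) * (ringChar F : ℂ)) := by
    rw [div_eq_iff hpc] at hk
    linear_combination hk
  have hval : (t.val : ℂ) = (k : ℂ) * (ringChar F : ℂ) := mul_left_cancel₀ h2 h3
  have hvi : (t.val : ℤ) = k * (ringChar F : ℤ) := by exact_mod_cast hval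
  have hdvd : (ringChar F : ℤ) ∣ (t.val : ℤ) := ⟨k, by linarith [hvi]⟩
  have hlt : t.val < ringChar F := ZMod.val_lt t
  have hne : t.val ≠ 0 := by
    intro h0
    exact hb ((ZMod.val_eq_zero t).mp h0)
  have : (ringChar F : ℤ) ≤ (t.val : ℤ) := Int.le_of_dvd (by exact_mod_cast Nat.pos_of_ne_zero hne) hdvd
  omega


/-- The finset of monic polynomials of degree `m`. -/
def MF (F : Type) [Field F] [Fintype F] (m : ℕ) : Finset (Polynomial F) :=
  (Finset.univ : Finset (Fin m → F)).image
    fun v => X ^ m + ∑ i : Fin m, C (v i) * X ^ (i : ℕ)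

lemma coeff_low {m : ℕ} (v : Fin m → F) (j : ℕ) :
    (∑ i : Fin m, C (v i) * X ^ (i : ℕ)).coeff j
      = if h : j < m then v ⟨j, h⟩ else 0 := by
  rw [finset_sum_coeff]
  simp only [coeff_C_mul, coeff_X_pow]
  by_cases h : j < m
  · rw [dif_pos h]
    rw [Finset.sum_eq_single (⟨j, h⟩ : Fin m)]
    · simp
    · intro b _ hb
      have : j ≠ (b : ℕ) := fun he => hb (by ext; simp [← he])
      simp [this]
    · simp
  · rw [dif_neg h]
    apply Finset.sum_eq_zero
    intro b _
    have : j ≠ (b : ℕ) := by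
      intro he; exact h (he ▸ b.isLt)
    simp [this]

lemma degree_low {m : ℕ} (v : Fin m → F) :
    (∑ i : Fin m, C (v i) * X ^ (i : ℕ)).degree < (m : WithBot ℕ) := by
  rw [degree_lt_iff_coeff_zero]
  intro j hj
  have hj' : ¬ j < m := by
    intro h
    exact absurd (lt_of_lt_of_le (Nat.cast_lt.mpr h) hj) (lt_irrefl _)
  rw [coeff_low, dif_neg hj']

lemma mem_MF {m : ℕ} {f : Polynomial F} :
    f ∈ MF F m ↔ f.Monic ∧ f.natDegree = m := by
  constructor
  · intro hf
    obtain ⟨v, _, rfl⟩ := Finset.mem_image.mp hf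
    have hdeg := degree_low v
    have hdX : (∑ i : Fin m, C (v i) * X ^ (i : ℕ)).degree < (X ^ m : Polynomial F).degree := by
      rwa [degree_X_pow]
    have hm : (X ^ m + ∑ i : Fin m, C (v i) * X ^ (i : ℕ)).Monic :=
      (monic_X_pow m).add_of_left hdX
    refine ⟨hm, ?_⟩
    have : (X ^ m + ∑ i : Fin m, C (v i) * X ^ (i : ℕ)).degree = (m : WithBot ℕ) := by
      rw [degree_add_eq_left_of_degree_lt hdX, degree_X_pow]
    exact natDegree_eq_of_degree_eq_some this
  · rintro ⟨hmon, rfl⟩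
    refine Finset.mem_image.mpr ⟨fun i => f.coeff (i : ℕ), Finset.mem_univ _, ?_⟩
    ext j
    rw [coeff_add, coeff_X_pow, coeff_low]
    rcases lt_trichotomy j f.natDegree with h | h | h
    · simp [dif_pos h, Nat.ne_of_lt h]
    · subst h
      simp [hmon.coeff_natDegree]
    · rw [dif_neg (by omega), if_neg (by omega), coeff_eq_zero_of_natDegree_lt h]
      simp

lemma card_MF (m : ℕ) : (MF F m).card = Fintype.card F ^ m := by
  rw [MF, Finset.card_image_of_injective _ ?_, Finset.card_univ, Fintype.card_fun,
    Fintype.card_fin]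
  intro v w hvw
  funext i
  have := congrArg (fun p => Polynomial.coeff p (i : ℕ)) hvw
  simp only [coeff_add, coeff_low] at this
  rw [dif_pos i.isLt, dif_pos i.isLt] at this
  simpa using this


lemma filter_dvd_eq_image {g : Polynomial F} (hg : g.Monic) {i : ℕ} (hle : g.natDegree ≤ i) :
    (MF F i).filter (fun f => g ∣ f) = (MF F (i - g.natDegree)).image (fun s => g * s) := by
  ext a
  simp only [Finset.mem_filter, Finset.mem_image, mem_MF]
  constructor
  · rintro ⟨⟨hmon, hdeg⟩, hdvd⟩
    refine ⟨a / g, ⟨?_, ?_⟩, ?_⟩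
    · exact hg.of_mul_monic_left (by rw [EuclideanDomain.mul_div_cancel' hg.ne_zero hdvd]; exact hmon)
    · have hs : (a / g).Monic :=
        hg.of_mul_monic_left (by rw [EuclideanDomain.mul_div_cancel' hg.ne_zero hdvd]; exact hmon)
      have := natDegree_mul hg.ne_zero hs.ne_zero
      rw [EuclideanDomain.mul_div_cancel' hg.ne_zero hdvd, hdeg] at this
      omega
    · exact EuclideanDomain.mul_div_cancel' hg.ne_zero hdvd
  · rintro ⟨s, ⟨hmon, hdeg⟩, rfl⟩
    refine ⟨⟨hg.mul hmon, ?_⟩, Dvd.intro _ rfl⟩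
    rw [natDegree_mul hg.ne_zero hmon.ne_zero, hdeg]
    omega

lemma filter_dvd_empty {g : Polynomial F} (hg : g.Monic) {i : ℕ} (hlt : i < g.natDegree) :
    (MF F i).filter (fun f => g ∣ f) = ∅ := by
  rw [Finset.filter_eq_empty_iff]
  intro a ha hdvd
  rw [mem_MF] at ha
  have := natDegree_le_of_dvd hdvd ha.1.ne_zero
  omega

lemma card_mult (g : Polynomial F) (hg : g.Monic) (i : ℕ) :
    ((MF F i).filter (fun f => g ∣ f)).card
      = if g.natDegree ≤ i then Fintype.card F ^ (i - g.natDegree) else 0 := by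
  by_cases hle : g.natDegree ≤ i
  · rw [if_pos hle, filter_dvd_eq_image hg hle,
      Finset.card_image_of_injective _ (mul_right_injective₀ hg.ne_zero), card_MF]
  · rw [if_neg hle, filter_dvd_empty hg (by omega), Finset.card_empty]

lemma KS {g : Polynomial F} (hg : g.Monic) {m : ℕ} (hdm : g.natDegree ≤ m) (h : Polynomial F) :
    ∑ a ∈ MF F m, eFrac (h * a) g = if g ∣ h then ((Fintype.card F : ℂ)) ^ m else 0 := by
  have hmod : ∀ p : Polynomial F, p % g = p %ₘ g := fun p => (modByMonic_eq_mod p hg).symm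
  by_cases hdvd : g ∣ h
  · rw [if_pos hdvd]
    have h1 : ∀ a ∈ MF F m, eFrac (h * a) g = 1 := by
      intro a _
      unfold eFrac
      rw [hmod, (modByMonic_eq_zero_iff_dvd hg).mpr (hdvd.mul_right a), coeff_zero, eChar_zero]
    rw [Finset.sum_congr rfl h1, Finset.sum_const, card_MF, nsmul_eq_mul, mul_one]
    push_cast
    ring
  · rw [if_neg hdvd]
    have hd1 : 1 ≤ g.natDegree := by
      rcases Nat.eq_zero_or_pos g.natDegree with h0 | h1
      · exact absurd (hg.natDegree_eq_zero.mp h0 ▸ one_dvd h) hdvd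
      · exact h1
    have hne : h %ₘ g ≠ 0 := fun h0 => hdvd ((modByMonic_eq_zero_iff_dvd hg).mp h0)
    have hedeg : (h %ₘ g).natDegree < g.natDegree :=
      natDegree_lt_natDegree hne (degree_modByMonic_lt h hg)
    set e := (h %ₘ g).natDegree with he
    set k := g.natDegree - 1 - e with hk
    obtain ⟨y₀, hy₀⟩ := eChar_ne_one (F := F)
    have hvne : (h %ₘ g).leadingCoeff ≠ 0 := leadingCoeff_ne_zero.mpr hne
    set s := y₀ * ((h %ₘ g).leadingCoeff)⁻¹ with hs
    set r₀ : Polynomial F := C s * X ^ k with hr₀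
    have hdegr₀ : r₀.degree ≤ (k : WithBot ℕ) := by
      refine (degree_mul_le _ _).trans ?_
      rw [degree_X_pow]
      calc (C s).degree + (k : WithBot ℕ) ≤ 0 + (k : WithBot ℕ) :=
            add_le_add_left degree_C_le _
        _ = (k : WithBot ℕ) := zero_add _
    have hw : ((h %ₘ g) * X ^ k) %ₘ g = (h %ₘ g) * X ^ k := by
      rw [modByMonic_eq_self_iff hg]
      have hdw : ((h %ₘ g) * X ^ k).degree ≤ ((g.natDegree - 1 : ℕ) : WithBot ℕ) := by
        refine (degree_mul_le _ _).trans ?_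
        rw [degree_X_pow]
        calc (h %ₘ g).degree + (k : WithBot ℕ) ≤ (e : WithBot ℕ) + (k : WithBot ℕ) :=
              add_le_add_left degree_le_natDegree _
          _ = ((e + k : ℕ) : WithBot ℕ) := by push_cast; ring
          _ = ((g.natDegree - 1 : ℕ) : WithBot ℕ) := by congr 1; omega
      refine hdw.trans_lt ?_
      rw [degree_eq_natDegree hg.ne_zero]
      exact_mod_cast Nat.sub_lt (by omega) one_pos
    have hkey : ((h * r₀) %ₘ g).coeff (g.natDegree - 1) = y₀ := by
      have h1 : (h * r₀) %ₘ g = ((h %ₘ g) * r₀) %ₘ g := by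
        have hsub : (h * r₀ - (h %ₘ g) * r₀) %ₘ g = 0 := by
          apply (modByMonic_eq_zero_iff_dvd hg).mpr
          have h2 : h - h %ₘ g = g * (h /ₘ g) := by
            have h3 := modByMonic_add_div h g
            linear_combination -h3
          rw [show h * r₀ - (h %ₘ g) * r₀ = (h - h %ₘ g) * r₀ by ring, h2, mul_assoc]
          exact Dvd.intro _ rfl
        rw [sub_modByMonic, sub_eq_zero] at hsub
        exact hsub
      rw [h1, show (h %ₘ g) * r₀ = s • ((h %ₘ g) * X ^ k) by
          rw [hr₀, smul_eq_C_mul]; ring,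
        smul_modByMonic, hw, coeff_smul, coeff_mul_X_pow']
      rw [if_pos (by omega : k ≤ g.natDegree - 1)]
      have : g.natDegree - 1 - k = e := by omega
      rw [this]
      have : (h %ₘ g).coeff e = (h %ₘ g).leadingCoeff := rfl
      rw [this, hs, smul_eq_mul]
      field_simp
    -- translation argument
    have hSL : ∑ a ∈ MF F m, eFrac (h * a) g
        = ∑ a ∈ MF F m, eChar F (((h * a) %ₘ g).coeff (g.natDegree - 1)) := by
      refine Finset.sum_congr rfl fun a _ => ?_
      unfold eFrac
      rw [hmod]
    have hmem : ∀ (r : Polynomial F), r.degree < (m : WithBot ℕ) →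
        ∀ a ∈ MF F m, a + r ∈ MF F m := by
      intro r hr a ha
      rw [mem_MF] at ha ⊢
      have hda : a.degree = (m : WithBot ℕ) := by
        rw [degree_eq_natDegree ha.1.ne_zero, ha.2]
      have hlt : r.degree < a.degree := hda ▸ hr
      refine ⟨ha.1.add_of_left hlt, ?_⟩
      rw [← ha.2]
      exact natDegree_eq_natDegree (degree_add_eq_left_of_degree_lt hlt)
    have hr₀m : r₀.degree < (m : WithBot ℕ) := by
      refine hdegr₀.trans_lt ?_
      exact_mod_cast (by omega : k < m)
    have hr₀m' : (-r₀).degree < (m : WithBot ℕ) := by rwa [degree_neg]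
    have htrans : ∑ a ∈ MF F m, eChar F (((h * a) %ₘ g).coeff (g.natDegree - 1))
        = ∑ a ∈ MF F m, eChar F (((h * (a + r₀)) %ₘ g).coeff (g.natDegree - 1)) := by
      refine Finset.sum_nbij' (fun a => a - r₀) (fun a => a + r₀)
        (fun a ha => ?_) (fun a ha => hmem r₀ hr₀m a ha)
        (fun a _ => by ring) (fun a _ => by ring)
        (fun a _ => by rw [show a - r₀ + r₀ = a from by ring])
      simpa [sub_eq_add_neg] using hmem (-r₀) hr₀m' a ha
    have hadd : ∀ a ∈ MF F m,
        eChar F (((h * (a + r₀)) %ₘ g).coeff (g.natDegree - 1))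
          = eChar F (((h * a) %ₘ g).coeff (g.natDegree - 1)) * eChar F y₀ := by
      intro a _
      rw [mul_add, add_modByMonic, coeff_add, hkey, eChar_add]
    rw [hSL]
    have hS : (∑ a ∈ MF F m, eChar F (((h * a) %ₘ g).coeff (g.natDegree - 1)))
        = (∑ a ∈ MF F m, eChar F (((h * a) %ₘ g).coeff (g.natDegree - 1))) * eChar F y₀ := by
      conv_lhs => rw [htrans]
      rw [Finset.sum_congr rfl hadd, ← Finset.sum_mul]
    have hzero : (∑ a ∈ MF F m, eChar F (((h * a) %ₘ g).coeff (g.natDegree - 1)))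
        * (1 - eChar F y₀) = 0 := by linear_combination hS
    rcases mul_eq_zero.mp hzero with h0 | h0
    · exact h0
    · exact absurd (sub_eq_zero.mp h0).symm hy₀

lemma step1 (χ : Polynomial F → ℂ) (n : ℕ) :
    ∑ f ∈ MF F n, (dCount f : ℂ) * χ f
      = ∑ i ∈ Finset.range (n + 1), ∑ a ∈ MF F i, ∑ b ∈ MF F (n - i), χ (a * b) := by
  set B := (Finset.range (n + 1)).biUnion (MF F) with hB
  have hmemB : ∀ a : Polynomial F, a ∈ B ↔ a.Monic ∧ a.natDegree ≤ n := by
    intro a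
    simp only [hB, Finset.mem_biUnion, Finset.mem_range, mem_MF]
    constructor
    · rintro ⟨i, hi, hmon, rfl⟩; exact ⟨hmon, by omega⟩
    · rintro ⟨hmon, hle⟩; exact ⟨a.natDegree, by omega, hmon, rfl⟩
  have hd : ∀ f ∈ MF F n, (dCount f : ℂ) = ((B.filter (fun a => a ∣ f)).card : ℂ) := by
    intro f hf
    rw [mem_MF] at hf
    congr 1
    unfold dCount
    rw [show {g : Polynomial F | g.Monic ∧ g ∣ f} = ↑(B.filter (fun a => a ∣ f)) from ?_,
      Set.ncard_coe_finset]
    ext a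
    simp only [Set.mem_setOf_eq, Finset.coe_filter, hmemB]
    constructor
    · rintro ⟨hmon, hdvd⟩
      exact ⟨⟨hmon, (natDegree_le_of_dvd hdvd hf.1.ne_zero).trans (le_of_eq hf.2)⟩, hdvd⟩
    · rintro ⟨⟨hmon, _⟩, hdvd⟩; exact ⟨hmon, hdvd⟩
  calc ∑ f ∈ MF F n, (dCount f : ℂ) * χ f
      = ∑ f ∈ MF F n, ∑ _a ∈ B.filter (fun a => a ∣ f), χ f := by
        refine Finset.sum_congr rfl fun f hf => ?_
        rw [hd f hf, Finset.sum_const, nsmul_eq_mul]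
    _ = ∑ f ∈ MF F n, ∑ a ∈ B, if a ∣ f then χ f else 0 := by
        refine Finset.sum_congr rfl fun f _ => Finset.sum_filter _ _
    _ = ∑ a ∈ B, ∑ f ∈ MF F n, if a ∣ f then χ f else 0 := Finset.sum_comm
    _ = ∑ a ∈ B, ∑ f ∈ (MF F n).filter (fun f => a ∣ f), χ f := by
        refine Finset.sum_congr rfl fun a _ => (Finset.sum_filter _ _).symm
    _ = ∑ a ∈ B, ∑ b ∈ MF F (n - a.natDegree), χ (a * b) := by
        refine Finset.sum_congr rfl fun a ha => ?_
        rw [hmemB] at ha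
        rw [filter_dvd_eq_image ha.1 ha.2, Finset.sum_image
          (fun x _ y _ hxy => mul_left_cancel₀ ha.1.ne_zero hxy)]
    _ = ∑ i ∈ Finset.range (n + 1), ∑ a ∈ MF F i, ∑ b ∈ MF F (n - a.natDegree), χ (a * b) := by
        rw [hB]
        refine Finset.sum_biUnion ?_
        intro i _ j _ hij
        refine Finset.disjoint_left.mpr fun a hai haj => ?_
        rw [mem_MF] at hai haj
        exact hij (hai.2 ▸ haj.2)
    _ = ∑ i ∈ Finset.range (n + 1), ∑ a ∈ MF F i, ∑ b ∈ MF F (n - i), χ (a * b) := by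
        refine Finset.sum_congr rfl fun i _ => Finset.sum_congr rfl fun a ha => ?_
        rw [(mem_MF.mp ha).2]

end Vrn
end

/-- **Voronoi summation formula for the divisor function over `𝔽_q[T]`.** With
`μ = 2·deg g - n - 2`:
`Σ_{f ∈ M_n} d(f)e(cf/g) = q^n(n+1-2 deg g)/|g| + (q^n/|g|)
  Σ_λ Σ_{η₁,η₂} Σ_{0 ≤ k ≤ μ} b_{μ-k}(λ,η₁,η₂) Σ_{f ∈ M_k} d(f)e(λc̄f/g)`,
the dual term being empty when `μ < 0`. -/
theorem voronoi_divisor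
    (F : Type) [Field F] [Fintype F] (q : ℕ) (hq : q = Fintype.card F)
    (n : ℕ) (g c cbar : Polynomial F)
    (hg : g.Monic) (hgdeg : 2 * g.natDegree ≤ n)
    (hcop : IsCoprime c g) (hcbar : g ∣ c * cbar - 1) :
    (∑ᶠ f ∈ {f : Polynomial F | f.Monic ∧ f.natDegree = n},
        (dCount f : ℂ) * eFrac (c * f) g) =
      (q : ℂ) ^ n * ((n : ℂ) + 1 - 2 * (g.natDegree : ℂ)) / (q : ℂ) ^ g.natDegree +
      (q : ℂ) ^ n / (q : ℂ) ^ g.natDegree *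
        ∑ lam : Fˣ, ∑ η₁ ∈ Finset.range 2, ∑ η₂ ∈ Finset.range 2,
          ∑ k ∈ Finset.range (2 * (g.natDegree : ℤ) - (n : ℤ) - 2 + 1).toNat,
            bCoeffD (lam : F) η₁ η₂
                (2 * (g.natDegree : ℤ) - (n : ℤ) - 2 - (k : ℤ)).toNat *
              ∑ᶠ f ∈ {f : Polynomial F | f.Monic ∧ f.natDegree = k},
                (dCount f : ℂ) * eFrac (Polynomial.C (lam : F) * cbar * f) g := by
  subst hq
  have hrange : (2 * (g.natDegree : ℤ) - (n : ℤ) - 2 + 1).toNat = 0 := by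
    have h2 : (2 * g.natDegree : ℤ) ≤ (n : ℤ) := by exact_mod_cast hgdeg
    omega
  rw [hrange]
  simp only [Finset.range_zero, Finset.sum_empty, Finset.sum_const_zero, mul_zero, add_zero]
  have hset : {f : Polynomial F | f.Monic ∧ f.natDegree = n} = ↑(Vrn.MF F n) := by
    ext f; simp [Vrn.mem_MF]
  rw [hset, finsum_mem_coe_finset, Vrn.step1 (fun f => eFrac (c * f) g) n]
  have hT : ∀ i ∈ Finset.range (n + 1),
      (∑ a ∈ Vrn.MF F i, ∑ b ∈ Vrn.MF F (n - i), eFrac (c * (a * b)) g)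
        = if g.natDegree ≤ i ∧ g.natDegree + i ≤ n
            then ((Fintype.card F : ℂ)) ^ (n - g.natDegree) else 0 := by
    intro i hi
    rw [Finset.mem_range] at hi
    by_cases hcase : g.natDegree + i ≤ n
    · have hmb : g.natDegree ≤ n - i := by omega
      have h1 : ∀ a ∈ Vrn.MF F i, (∑ b ∈ Vrn.MF F (n - i), eFrac (c * (a * b)) g)
          = if g ∣ a then ((Fintype.card F : ℂ)) ^ (n - i) else 0 := by
        intro a _
        have hiff : g ∣ c * a ↔ g ∣ a :=
          ⟨fun hd => hcop.symm.dvd_of_dvd_mul_left hd, fun hd => hd.mul_left c⟩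
        calc (∑ b ∈ Vrn.MF F (n - i), eFrac (c * (a * b)) g)
            = ∑ b ∈ Vrn.MF F (n - i), eFrac ((c * a) * b) g :=
              Finset.sum_congr rfl fun b _ => by rw [show c * (a * b) = (c * a) * b from by ring]
          _ = if g ∣ c * a then ((Fintype.card F : ℂ)) ^ (n - i) else 0 := Vrn.KS hg hmb (c * a)
          _ = if g ∣ a then ((Fintype.card F : ℂ)) ^ (n - i) else 0 := if_congr hiff rfl rfl
      rw [Finset.sum_congr rfl h1, ← Finset.sum_filter, Finset.sum_const, Vrn.card_mult g hg i]
      by_cases hdi : g.natDegree ≤ i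
      · rw [if_pos hdi, if_pos ⟨hdi, hcase⟩, nsmul_eq_mul]
        push_cast
        rw [← pow_add]
        congr 1
        omega
      · rw [if_neg hdi, if_neg (fun hc => hdi hc.1), zero_smul]
    · have hdi : g.natDegree ≤ i := by omega
      rw [if_neg (fun hc => hcase hc.2), Finset.sum_comm]
      apply Finset.sum_eq_zero
      intro b hb
      have h1 : (∑ a ∈ Vrn.MF F i, eFrac (c * (a * b)) g)
          = if g ∣ c * b then ((Fintype.card F : ℂ)) ^ i else 0 := by
        calc (∑ a ∈ Vrn.MF F i, eFrac (c * (a * b)) g)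
            = ∑ a ∈ Vrn.MF F i, eFrac ((c * b) * a) g :=
              Finset.sum_congr rfl fun a _ => by rw [show c * (a * b) = (c * b) * a from by ring]
          _ = _ := Vrn.KS hg hdi (c * b)
      rw [h1, if_neg]
      intro hgcb
      have hgb : g ∣ b := hcop.symm.dvd_of_dvd_mul_left hgcb
      rw [Vrn.mem_MF] at hb
      have := natDegree_le_of_dvd hgb hb.1.ne_zero
      omega
  rw [Finset.sum_congr rfl hT, ← Finset.sum_filter]
  have hfilt : (Finset.range (n + 1)).filter
      (fun i => g.natDegree ≤ i ∧ g.natDegree + i ≤ n) = Finset.Icc g.natDegree (n - g.natDegree) := by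
    ext j
    simp only [Finset.mem_filter, Finset.mem_range, Finset.mem_Icc]
    omega
  rw [hfilt, Finset.sum_const, Nat.card_Icc, nsmul_eq_mul]
  have hQ : (Fintype.card F : ℂ) ≠ 0 := Nat.cast_ne_zero.mpr Fintype.card_ne_zero
  have hcast : ((n - g.natDegree + 1 - g.natDegree : ℕ) : ℂ)
      = (n : ℂ) + 1 - 2 * (g.natDegree : ℂ) := by
    rw [show n - g.natDegree + 1 - g.natDegree = n + 1 - 2 * g.natDegree from by omega,
      Nat.cast_sub (by omega)]
    push_cast
    ring
  rw [hcast, eq_div_iff (pow_ne_zero _ hQ), mul_assoc, ← pow_add,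
    show n - g.natDegree + g.natDegree = n from by omega]
  ring
end
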